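/- Fix N ∈ ℕ, x ∈ ℂ^{N×N}, and Λ ⊂ {1,…,N}² with Λ^c ≠ ∅ such that Null(P̃_Λ D) = span{𝟙_{I_j} : j = 1,…,n} for a partition {I_1,…,I_n} of {1,…,N}². Let σ have entries σ_t = (Dx)_t/|(Dx)_t| when (Dx)_t ≠ 0 and 0 otherwise, let f_j = 𝟙_{I_j}/√|I_j| for j = 1,…,n, and let ξ := D* P̃_{Λ^c} σ − ∑_{j=1}^n ⟨D* P̃_{Λ^c} σ, f_j⟩ f_j. Then: (a) for each j = 1,…,n, (√|I_j|/Per(I_j))·|⟨f_j, D* P̃_{Λ^c} σ⟩| ≤ 1; and (b) if ξ ≠ 0, then ‖ξ‖₂^{−1}·|⟨ξ/‖ξ‖₂, D* P̃_{Λ^c} σ⟩| = 1. -/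

import Mathlib

noncomputable section

/-- The pixel grid `{1,…,N}²` (zero-based as `Fin N × Fin N`). -/
abbrev idx (N : ℕ) := Fin N × Fin N

/-- Images `ℂ^{N×N}` with the Euclidean (`ℓ²`) structure. -/
abbrev V (N : ℕ) := EuclideanSpace ℂ (idx N)

/-- The codomain of the discrete gradient: pairs `(D₁x, D₂x)` stacked. -/
abbrev Wsp (N : ℕ) := EuclideanSpace ℂ (idx N ⊕ idx N)

/-- The matrix of the discrete gradient `D = (D₁, D₂)` with zero (Neumann)
boundary: `(D₁x)_{t} = x_{t+e₁} - x_t` for `t₁ < N` and `0` on the last row,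
similarly for `D₂`. -/
def DM (N : ℕ) : Matrix (idx N ⊕ idx N) (idx N) ℂ :=
  Matrix.of fun i j =>
    match i with
    | Sum.inl t => if h : t.1.1 + 1 < N then
        (if j = (⟨t.1.1 + 1, h⟩, t.2) then 1 else if j = t then -1 else 0) else 0
    | Sum.inr t => if h : t.2.1 + 1 < N then
        (if j = (t.1, ⟨t.2.1 + 1, h⟩) then 1 else if j = t then -1 else 0) else 0

/-- The discrete gradient `D : ℂ^{N×N} → ℂ^{N×N} × ℂ^{N×N}` as a linear map. -/
def Dlin (N : ℕ) : V N →ₗ[ℂ] Wsp N := Matrix.toEuclideanLin (DM N)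

/-- Its adjoint `D*`. -/
def Dadj (N : ℕ) : Wsp N →ₗ[ℂ] V N := LinearMap.adjoint (Dlin N)

/-- The "base point" of an index of a gradient pair. -/
def pt {N : ℕ} : idx N ⊕ idx N → idx N := Sum.elim id id

/-- The projection `P̃_Λ` acting componentwise on gradient pairs. -/
def PW (N : ℕ) (Λ : Finset (idx N)) : Wsp N →ₗ[ℂ] Wsp N :=
  Matrix.toEuclideanLin (Matrix.diagonal fun i => if pt i ∈ Λ then (1 : ℂ) else 0)

/-- The Euclidean length `|(Dx)_t|` of the gradient pair of `x` at `t`. -/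
def gradLen (N : ℕ) (x : V N) (t : idx N) : ℝ :=
  Real.sqrt (‖Dlin N x (Sum.inl t)‖ ^ 2 + ‖Dlin N x (Sum.inr t)‖ ^ 2)

open Classical in
/-- The generalized sign `σ` of the gradient: `σ_t = (Dx)_t/|(Dx)_t|` when
`(Dx)_t ≠ 0` and `0` otherwise. -/
def sigma (N : ℕ) (x : V N) : Wsp N :=
  (WithLp.toLp 2 (fun i => if gradLen N x (pt i) = 0 then 0 else
    Dlin N x i / (gradLen N x (pt i) : ℂ)) : EuclideanSpace ℂ (idx N ⊕ idx N))

/-- Indicator vector `𝟙_I ∈ ℂ^{N×N}`. -/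
def ind (N : ℕ) (I : Finset (idx N)) : V N :=
  (WithLp.toLp 2 (fun t => if t ∈ I then 1 else 0) : EuclideanSpace ℂ (idx N))

/-- `Per(I) = ‖𝟙_I‖_{TV,1}`, the anisotropic total variation of the indicator. -/
def Per (N : ℕ) (I : Finset (idx N)) : ℝ := ∑ i, ‖Dlin N (ind N I) i‖

/-- The normalized indicator `f_I = 𝟙_I/√|I|`. -/
def fI (N : ℕ) (I : Finset (idx N)) : V N :=
  (WithLp.toLp 2 (fun t => if t ∈ I then ((Real.sqrt I.card : ℂ))⁻¹ else 0) : EuclideanSpace ℂ (idx N))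

/-- `D* P̃_{Λᶜ} σ`. -/
def vLam (N : ℕ) (Λ : Finset (idx N)) (x : V N) : V N :=
  Dadj N (PW N Λᶜ (sigma N x))

/-- `ξ = D* P̃_{Λᶜ} σ - ∑_j ⟨D* P̃_{Λᶜ} σ, f_j⟩ f_j`. -/
def xi2d (N : ℕ) (Λ : Finset (idx N)) (x : V N) (n : ℕ) (I : Fin n → Finset (idx N)) : V N :=
  vLam N Λ x - ∑ j, (inner ℂ (fI N (I j)) (vLam N Λ x) : ℂ) • fI N (I j)

/- STATEMENT 18: the dual-certificate normalization conditions in two dimensions. -/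

lemma fI_orth (N : ℕ) (I J : Finset (idx N)) (h : Disjoint I J) :
    (inner ℂ (fI N I) (fI N J) : ℂ) = 0 := by
  rw [PiLp.inner_apply]; simp only [RCLike.inner_apply']
  apply Finset.sum_eq_zero
  intro t _
  show (starRingEnd ℂ) (fI N I t) * fI N J t = 0
  show (starRingEnd ℂ) (if t ∈ I then ((Real.sqrt I.card : ℂ))⁻¹ else 0) *
    (if t ∈ J then ((Real.sqrt J.card : ℂ))⁻¹ else 0) = 0
  by_cases ht : t ∈ I
  · have : t ∉ J := Finset.disjoint_left.mp h ht
    simp [ht, this]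
  · simp [ht]

lemma fI_norm (N : ℕ) (I : Finset (idx N)) (h : I.Nonempty) :
    (inner ℂ (fI N I) (fI N I) : ℂ) = 1 := by
  rw [PiLp.inner_apply]; simp only [RCLike.inner_apply']
  have hc : (0:ℝ) < I.card := by exact_mod_cast Finset.card_pos.mpr h
  have key : ∀ t : idx N, (starRingEnd ℂ) (fI N I t) * fI N I t
      = if t ∈ I then ((I.card : ℂ))⁻¹ else 0 := by
    intro t
    show (starRingEnd ℂ) (if t ∈ I then ((Real.sqrt I.card : ℂ))⁻¹ else 0) *
      (if t ∈ I then ((Real.sqrt I.card : ℂ))⁻¹ else 0) = _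
    split
    · rw [map_inv₀, Complex.conj_ofReal,
        ← mul_inv, ← Complex.ofReal_mul, Real.mul_self_sqrt hc.le]
      push_cast
      ring
    · simp
  calc (∑ t, (starRingEnd ℂ) (fI N I t) * fI N I t)
      = ∑ t : idx N, if t ∈ I then ((I.card : ℂ))⁻¹ else 0 :=
        Finset.sum_congr rfl fun t _ => key t
    _ = 1 := by
        rw [Finset.sum_ite_mem, Finset.univ_inter, Finset.sum_const, nsmul_eq_mul,
          mul_inv_cancel₀ (by exact_mod_cast hc.ne')]

lemma PW_apply (N : ℕ) (Λ : Finset (idx N)) (w : Wsp N) (i : idx N ⊕ idx N) :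
    PW N Λ w i = (if pt i ∈ Λ then (1:ℂ) else 0) * w i := by
  show (Matrix.mulVec (Matrix.diagonal fun i => if pt i ∈ Λ then (1 : ℂ) else 0) w) i = _
  rw [Matrix.mulVec_diagonal]

lemma sigma_le_one (N : ℕ) (x : V N) (i : idx N ⊕ idx N) : ‖sigma N x i‖ ≤ 1 := by
  show ‖if gradLen N x (pt i) = 0 then 0 else
    Dlin N x i / (gradLen N x (pt i) : ℂ)‖ ≤ 1
  split
  · simp
  · rename_i hg
    have hg0 : 0 ≤ gradLen N x (pt i) := Real.sqrt_nonneg _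
    have hgpos : 0 < gradLen N x (pt i) := lt_of_le_of_ne hg0 (Ne.symm hg)
    rw [norm_div, Complex.norm_real, Real.norm_of_nonneg hg0, div_le_one hgpos]
    have hb : ‖Dlin N x i‖ ≤ gradLen N x (pt i) := by
      cases i with
      | inl t =>
        show ‖Dlin N x (Sum.inl t)‖ ≤ gradLen N x t
        rw [gradLen, show (t : idx N) = pt (Sum.inl t) from rfl]
        exact (Real.le_sqrt (norm_nonneg _) (by positivity)).mpr (by nlinarith [sq_nonneg ‖Dlin N x (Sum.inr t)‖])
      | inr t =>
        show ‖Dlin N x (Sum.inr t)‖ ≤ gradLen N x t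
        rw [gradLen]
        exact (Real.le_sqrt (norm_nonneg _) (by positivity)).mpr (by nlinarith [sq_nonneg ‖Dlin N x (Sum.inl t)‖])
    exact hb

lemma PWsigma_le_one (N : ℕ) (Λ : Finset (idx N)) (x : V N) (i : idx N ⊕ idx N) :
    ‖PW N Λᶜ (sigma N x) i‖ ≤ 1 := by
  rw [PW_apply]
  split
  · rw [one_mul]; exact sigma_le_one N x i
  · simp

lemma fI_eq_smul (N : ℕ) (I : Finset (idx N)) :
    fI N I = ((Real.sqrt I.card : ℂ))⁻¹ • ind N I := by
  ext t
  show (if t ∈ I then ((Real.sqrt I.card : ℂ))⁻¹ else 0)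
    = ((Real.sqrt I.card : ℂ))⁻¹ * (if t ∈ I then 1 else 0)
  split <;> simp

lemma per_nonneg (N : ℕ) (I : Finset (idx N)) : 0 ≤ Per N I :=
  Finset.sum_nonneg fun _ _ => norm_nonneg _

lemma inner_fI_vLam_le (N : ℕ) (Λ : Finset (idx N)) (x : V N) (I : Finset (idx N)) :
    ‖(inner ℂ (fI N I) (vLam N Λ x) : ℂ)‖ ≤ (Real.sqrt I.card)⁻¹ * Per N I := by
  rw [vLam, Dadj, LinearMap.adjoint_inner_right, PiLp.inner_apply]; simp only [RCLike.inner_apply']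
  have hD : Dlin N (fI N I) = ((Real.sqrt I.card : ℂ))⁻¹ • Dlin N (ind N I) := by
    rw [fI_eq_smul, map_smul]
  have hDn : ∀ i, ‖Dlin N (fI N I) i‖ = (Real.sqrt I.card)⁻¹ * ‖Dlin N (ind N I) i‖ := by
    intro i
    rw [hD]
    show ‖((Real.sqrt I.card : ℂ))⁻¹ • Dlin N (ind N I) i‖ = _
    rw [norm_smul, norm_inv, Complex.norm_real, Real.norm_of_nonneg (Real.sqrt_nonneg _)]
  calc ‖∑ i, (starRingEnd ℂ) (Dlin N (fI N I) i) * PW N Λᶜ (sigma N x) i‖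
      ≤ ∑ i, ‖(starRingEnd ℂ) (Dlin N (fI N I) i) * PW N Λᶜ (sigma N x) i‖ :=
        norm_sum_le _ _
    _ ≤ ∑ i, ‖Dlin N (fI N I) i‖ := by
        apply Finset.sum_le_sum
        intro i _
        rw [norm_mul, RCLike.norm_conj]
        calc ‖Dlin N (fI N I) i‖ * ‖PW N Λᶜ (sigma N x) i‖
            ≤ ‖Dlin N (fI N I) i‖ * 1 :=
              mul_le_mul_of_nonneg_left (PWsigma_le_one N Λ x i) (norm_nonneg _)
          _ = ‖Dlin N (fI N I) i‖ := mul_one _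
    _ = (Real.sqrt I.card)⁻¹ * Per N I := by
        rw [Per, Finset.mul_sum]
        exact Finset.sum_congr rfl fun i _ => hDn i

theorem stmt18 (N : ℕ) (x : V N) (Λ : Finset (idx N)) (hΛc : Λ ≠ Finset.univ)
    (n : ℕ) (I : Fin n → Finset (idx N))
    (hne : ∀ j, (I j).Nonempty)
    (hdisj : ∀ j l, j ≠ l → Disjoint (I j) (I l))
    (hcover : Finset.univ.biUnion I = (Finset.univ : Finset (idx N)))
    (hnull : LinearMap.ker ((PW N Λ).comp (Dlin N)) =
      Submodule.span ℂ (Set.range fun j => ind N (I j))) :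
    (∀ j : Fin n,
      Real.sqrt (I j).card / Per N (I j) *
        ‖(inner ℂ (fI N (I j)) (vLam N Λ x) : ℂ)‖ ≤ 1) ∧
    (xi2d N Λ x n I ≠ 0 →
      ‖xi2d N Λ x n I‖⁻¹ *
        ‖(inner ℂ ((‖xi2d N Λ x n I‖ : ℂ)⁻¹ • xi2d N Λ x n I) (vLam N Λ x) : ℂ)‖ = 1) := by
  constructor
  · intro j
    by_cases hPer : Per N (I j) = 0
    · rw [hPer, div_zero, zero_mul]; norm_num
    · have hPerpos : 0 < Per N (I j) := lt_of_le_of_ne (per_nonneg N (I j)) (Ne.symm hPer)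
      have hcpos : (0:ℝ) < (I j).card := by exact_mod_cast Finset.card_pos.mpr (hne j)
      have hspos : 0 < Real.sqrt (I j).card := Real.sqrt_pos.mpr hcpos
      rw [div_mul_eq_mul_div, div_le_one hPerpos]
      calc Real.sqrt (I j).card * ‖(inner ℂ (fI N (I j)) (vLam N Λ x) : ℂ)‖
          ≤ Real.sqrt (I j).card * ((Real.sqrt (I j).card)⁻¹ * Per N (I j)) :=
            mul_le_mul_of_nonneg_left (inner_fI_vLam_le N Λ x (I j)) hspos.le
        _ = Per N (I j) := by field_simp
  · intro hxi
    set ξ := xi2d N Λ x n I with hξdef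
    set v := vLam N Λ x with hvdef
    have hip : ∀ j l : Fin n, (inner ℂ (fI N (I j)) (fI N (I l)) : ℂ)
        = if j = l then 1 else 0 := by
      intro j l
      by_cases h : j = l
      · subst h; rw [if_pos rfl]; exact fI_norm N (I j) (hne j)
      · rw [if_neg h]; exact fI_orth N (I j) (I l) (hdisj j l h)
    have horth : ∀ j : Fin n, (inner ℂ (fI N (I j)) ξ : ℂ) = 0 := by
      intro j
      rw [hξdef, xi2d, inner_sub_right, inner_sum]
      simp only [inner_smul_right, hip]
      simp only [mul_ite, mul_one, mul_zero, Finset.sum_ite_eq, Finset.mem_univ, if_true]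
      rw [sub_self]
    have hxiv : (inner ℂ ξ v : ℂ) = (‖ξ‖ : ℂ) ^ 2 := by
      have hv : v = ξ + ∑ j, (inner ℂ (fI N (I j)) v : ℂ) • fI N (I j) := by
        rw [hξdef, xi2d, ← hvdef, sub_add_cancel]
      rw [hv, inner_add_right, inner_sum]
      have : ∀ j : Fin n, (inner ℂ ξ ((inner ℂ (fI N (I j)) v : ℂ) • fI N (I j)) : ℂ) = 0 := by
        intro j
        rw [inner_smul_right,
          show (inner ℂ ξ (fI N (I j)) : ℂ) = (starRingEnd ℂ) (inner ℂ (fI N (I j)) ξ) from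
            (inner_conj_symm _ _).symm,
          horth j, map_zero, mul_zero]
      rw [Finset.sum_congr rfl fun j _ => this j, Finset.sum_const, smul_zero, add_zero,
        inner_self_eq_norm_sq_to_K]
      norm_num
    have hn0 : ‖ξ‖ ≠ 0 := norm_ne_zero_iff.mpr hxi
    have hcn0 : (‖ξ‖ : ℂ) ≠ 0 := by exact_mod_cast hn0
    have : (inner ℂ ((‖ξ‖ : ℂ)⁻¹ • ξ) v : ℂ) = (‖ξ‖ : ℂ) := by
      rw [inner_smul_left, hxiv, map_inv₀, Complex.conj_ofReal]
      field_simp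
    rw [this, Complex.norm_real, Real.norm_of_nonneg (norm_nonneg _),
      inv_mul_cancel₀ hn0]


end
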